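/- For the robust Gittins index $\gamma(s)$ of a single bandit, the optimal stopping value satisfies $\operatorname{essinf}_{\tau \in \mathcal{T}(s)} V(\tau, \gamma(s)) = 0$ almost surely, where $V(\tau, \lambda) := \mathcal{E}(\sum_{t=1}^{\tau} \beta^t (h(s+t) - \lambda) \mid \mathcal{F}_s)$. In particular, for every $\tau \in \mathcal{T}(s)$, $\mathcal{E}(\sum_{t=1}^{\tau} \beta^t (h(s+t) - \gamma(s)) \mid \mathcal{F}_s) \ge 0$. -/

import Mathlib

open MeasureTheory Filter Classical Finset

variable {Ω : Type*} [MeasurableSpace Ω]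

/-- An `(ℱ t)`-consistent coherent nonlinear expectation (Definition 2.2). -/
structure ConsistentCNE (μ : Measure Ω) (ℱ : ℕ → MeasurableSpace Ω)
    (E : ℕ → (Ω → ℝ) → (Ω → ℝ)) : Prop where
  adapted : ∀ t X, Measurable[ℱ t] (E t X)
  mono : ∀ t (X Y : Ω → ℝ), Y ≤ᵐ[μ] X → E t Y ≤ᵐ[μ] E t X
  strictMono : ∀ t (X Y : Ω → ℝ), Y ≤ᵐ[μ] X → E t X =ᵐ[μ] E t Y → X =ᵐ[μ] Y
  transl : ∀ t (X c : Ω → ℝ), Measurable[ℱ t] c →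
      E t (fun ω => X ω + c ω) =ᵐ[μ] fun ω => E t X ω + c ω
  normalized : ∀ t, E t (fun _ => 0) =ᵐ[μ] fun _ => 0
  subadd : ∀ t (X Y : Ω → ℝ),
      E t (fun ω => X ω + Y ω) ≤ᵐ[μ] fun ω => E t X ω + E t Y ω
  posHom : ∀ t (X lam : Ω → ℝ), Measurable[ℱ t] lam → (∀ᵐ ω ∂μ, 0 ≤ lam ω) →
      E t (fun ω => lam ω * X ω) =ᵐ[μ] fun ω => lam ω * E t X ω
  lebesgue : ∀ t (Xn : ℕ → Ω → ℝ) (X : Ω → ℝ) (K : ℝ),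
      (∀ n, ∀ᵐ ω ∂μ, |Xn n ω| ≤ K) →
      (∀ᵐ ω ∂μ, Tendsto (fun n => Xn n ω) atTop (nhds (X ω))) →
      ∀ᵐ ω ∂μ, Tendsto (fun n => E t (Xn n) ω) atTop (nhds (E t X ω))
  tower : ∀ s t (X : Ω → ℝ), s ≤ t → E s X =ᵐ[μ] E s (E t X)

/-- `𝒯(s)`: the bounded positive `(ℱ (s+t))`-stopping times. -/
def stopTimes (ℱ : ℕ → MeasurableSpace Ω) (s : ℕ) : Set (Ω → ℕ) :=
  {τ | (∀ ω, 1 ≤ τ ω) ∧ (∃ B, ∀ ω, τ ω ≤ B) ∧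
    ∀ n, MeasurableSet[ℱ (s + n)] {ω | τ ω = n}}

/-- The optimal-stopping value
`V(τ, λ) = 𝓔(∑_{t=1}^{τ} β^t (h(s+t) - λ) | ℱ_s)`. -/
noncomputable def banditV (E : ℕ → (Ω → ℝ) → (Ω → ℝ)) (h : ℕ → Ω → ℝ) (β : ℝ)
    (s : ℕ) (τ : Ω → ℕ) (lam : Ω → ℝ) : Ω → ℝ :=
  E s (fun ω => ∑ t ∈ Finset.Icc 1 (τ ω), β ^ t * (h (s + t) ω - lam ω))

/-- The hitting time `σ(s, λ) = inf {θ ≥ 1 : γ(s + θ) > λ}` of the Gittins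
index process above a level `λ < C` (Definition 4.1). -/
noncomputable def hitTime (γ : ℕ → Ω → ℝ) (s : ℕ) (lam : Ω → ℝ) : Ω → ℕ :=
  fun ω => sInf {θ : ℕ | 1 ≤ θ ∧ lam ω < γ (s + θ) ω}

section AuxLemmas

variable {μ : Measure Ω} {ℱ : ℕ → MeasurableSpace Ω} {E : ℕ → (Ω → ℝ) → (Ω → ℝ)}

lemma cne_const (hE : ConsistentCNE μ ℱ E) (s : ℕ) (c : ℝ) :
    E s (fun _ => c) =ᵐ[μ] fun _ => c := by
  have h1 := hE.transl s (fun _ => 0) (fun _ => c) measurable_const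
  have h2 := hE.normalized s
  simp only [zero_add] at h1
  filter_upwards [h1, h2] with ω e1 e2
  simp [e1, e2]

lemma cne_lb (hE : ConsistentCNE μ ℱ E) (s : ℕ) (X : Ω → ℝ) (m : ℝ)
    (hm : ∀ ω, m ≤ X ω) : ∀ᵐ ω ∂μ, m ≤ E s X ω := by
  have h1 := hE.mono s X (fun _ => m) (ae_of_all _ hm)
  filter_upwards [h1, cne_const hE s m] with ω e1 e2
  rw [← e2]; exact e1

lemma cne_ub (hE : ConsistentCNE μ ℱ E) (s : ℕ) (X : Ω → ℝ) (m : ℝ)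
    (hm : ∀ ω, X ω ≤ m) : ∀ᵐ ω ∂μ, E s X ω ≤ m := by
  have h1 := hE.mono s (fun _ => m) X (ae_of_all _ hm)
  filter_upwards [h1, cne_const hE s m] with ω e1 e2
  rw [← e2]; exact e1

lemma cne_loc_eq (hE : ConsistentCNE μ ℱ E) (s : ℕ) (X Y : Ω → ℝ) (A : Set Ω)
    (hA : MeasurableSet[ℱ s] A) (hXY : ∀ ω ∈ A, X ω = Y ω) :
    ∀ᵐ ω ∂μ, ω ∈ A → E s X ω = E s Y ω := by
  set ind : Ω → ℝ := A.indicator (fun _ => 1) with hind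
  have hindMeas : Measurable[ℱ s] ind := measurable_const.indicator hA
  have hindPos : ∀ᵐ ω ∂μ, 0 ≤ ind ω := ae_of_all _ fun ω => Set.indicator_nonneg (by simp) ω
  have h1 := hE.posHom s X ind hindMeas hindPos
  have h2 := hE.posHom s Y ind hindMeas hindPos
  have heq : (fun ω => ind ω * X ω) = (fun ω => ind ω * Y ω) := by
    funext ω
    by_cases hω : ω ∈ A
    · simp [hind, Set.indicator_of_mem hω, hXY ω hω]
    · simp [hind, Set.indicator_of_notMem hω]
  rw [heq] at h1
  filter_upwards [h1, h2] with ω e1 e2 hω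
  have hi : ind ω = 1 := by simp [hind, Set.indicator_of_mem hω]
  have : ind ω * E s X ω = ind ω * E s Y ω := e1.symm.trans e2
  simpa [hi] using this

lemma cne_loc_lb (hE : ConsistentCNE μ ℱ E) (s : ℕ) (X : Ω → ℝ) (A : Set Ω)
    (hA : MeasurableSet[ℱ s] A) (b : ℝ) (hb : ∀ ω ∈ A, b ≤ X ω) :
    ∀ᵐ ω ∂μ, ω ∈ A → b ≤ E s X ω := by
  set ind : Ω → ℝ := A.indicator (fun _ => 1) with hind
  have hindMeas : Measurable[ℱ s] ind := measurable_const.indicator hA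
  have hindPos : ∀ᵐ ω ∂μ, 0 ≤ ind ω := ae_of_all _ fun ω => Set.indicator_nonneg (by simp) ω
  have h1 := hE.posHom s X ind hindMeas hindPos
  have h2 := hE.posHom s (fun _ => b) ind hindMeas hindPos
  have hmono := hE.mono s (fun ω => ind ω * X ω) (fun ω => ind ω * b)
    (ae_of_all _ fun ω => by
      by_cases hω : ω ∈ A
      · simp only [hind, Set.indicator_of_mem hω]; simpa using hb ω hω
      · simp [hind, Set.indicator_of_notMem hω])
  filter_upwards [h1, h2, hmono, cne_const hE s b] with ω e1 e2 e3 e4 hω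
  have hi : ind ω = 1 := by simp [hind, Set.indicator_of_mem hω]
  rw [e1, e2, e4, hi] at e3
  simpa using e3

lemma sum_pow_nonneg' {β : ℝ} (hβ : 0 < β) (n : ℕ) : 0 ≤ ∑ t ∈ Icc 1 n, β ^ t :=
  Finset.sum_nonneg fun t _ => pow_nonneg hβ.le t

lemma sum_pow_le' {β : ℝ} (hβ0 : 0 < β) (hβ1 : β < 1) (n : ℕ) :
    ∑ t ∈ Icc 1 n, β ^ t ≤ β / (1 - β) := by
  have h1β : 0 < 1 - β := by linarith
  have key : ∑ t ∈ Icc 1 n, β ^ t = β * ∑ t ∈ range n, β ^ t := by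
    induction n with
    | zero => simp
    | succ n ih =>
      rw [Finset.sum_Icc_succ_top (Nat.one_le_iff_ne_zero.mpr (Nat.succ_ne_zero n)),
        Finset.sum_range_succ, ih]
      ring
  have hgs : ∑ t ∈ range n, β ^ t ≤ 1 / (1 - β) := by
    rw [geom_sum_eq (ne_of_lt hβ1)]
    have heq : (β ^ n - 1) / (β - 1) = (1 - β ^ n) / (1 - β) := by
      rw [div_eq_div_iff (by linarith) (by linarith)]; ring
    rw [heq]
    apply div_le_div_of_nonneg_right ?_ h1β.le
    have := pow_nonneg hβ0.le n
    linarith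
  calc ∑ t ∈ Icc 1 n, β ^ t = β * ∑ t ∈ range n, β ^ t := key
    _ ≤ β * (1 / (1 - β)) := mul_le_mul_of_nonneg_left hgs hβ0.le
    _ = β / (1 - β) := by ring

lemma sum_pow_ge' {β : ℝ} (hβ0 : 0 < β) {n : ℕ} (hn : 1 ≤ n) :
    β ≤ ∑ t ∈ Icc 1 n, β ^ t := by
  have := Finset.single_le_sum (f := fun t => β ^ t)
    (fun t _ => pow_nonneg hβ0.le t) (by simp [hn] : (1:ℕ) ∈ Icc 1 n)
  simpa using this

end AuxLemmas


/-- **Theorem 4.1 & Corollary 4.1.**  For the robust Gittins index `γ(s)`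
(given through its defining property as the `ℱ_s`-essential infimum of rewards
making the optimal stopping value nonpositive, with `Vinf s λ` the
`ℱ_s`-essential infimum of `{V(τ,λ) : τ ∈ 𝒯(s)}`), the optimal stopping value
satisfies `essinf_τ V(τ, γ(s)) = 0` a.s.; in particular `V(τ, γ(s)) ≥ 0` for
every `τ ∈ 𝒯(s)`. -/
theorem stmt5 (μ : Measure Ω) [IsProbabilityMeasure μ]
    (ℱ : ℕ → MeasurableSpace Ω) (hℱmono : Monotone ℱ)
    (hℱle : ∀ t, ℱ t ≤ ‹MeasurableSpace Ω›)
    (E : ℕ → (Ω → ℝ) → (Ω → ℝ)) (hE : ConsistentCNE μ ℱ E)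
    (T : ℕ) (C : ℝ) (hC : 0 < C) (β : ℝ) (hβ : β ∈ Set.Ioo (0 : ℝ) 1)
    (h : ℕ → Ω → ℝ) (hhAdapted : ∀ t, Measurable[ℱ t] (h t))
    (hhBdd : ∀ t, t ≤ T → ∀ ω, 0 ≤ h t ω ∧ h t ω < C)
    (hhC : ∀ t, T < t → ∀ ω, h t ω = C)
    (s : ℕ)
    -- `Vinf s λ` is the `ℱ_s`-essential infimum of `{V(τ,λ) : τ ∈ 𝒯(s)}`
    (Vinf : (Ω → ℝ) → Ω → ℝ)
    (hVinfMeas : ∀ lam, Measurable[ℱ s] (Vinf lam))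
    (hVinfLB : ∀ lam, ∀ τ ∈ stopTimes ℱ s, Vinf lam ≤ᵐ[μ] banditV E h β s τ lam)
    (hVinfGreatest : ∀ (lam Z : Ω → ℝ), Measurable[ℱ s] Z →
      (∀ τ ∈ stopTimes ℱ s, Z ≤ᵐ[μ] banditV E h β s τ lam) → Z ≤ᵐ[μ] Vinf lam)
    -- `γ s` is the `ℱ_s`-essential infimum of `{λ ∈ L^∞(ℱ_s) : Vinf λ ≤ 0 a.s.}`
    (γ : ℕ → Ω → ℝ) (hγMeas : Measurable[ℱ s] (γ s))
    (hγLB : ∀ lam : Ω → ℝ, Measurable[ℱ s] lam → (∃ K, ∀ ω, |lam ω| ≤ K) →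
      Vinf lam ≤ᵐ[μ] 0 → γ s ≤ᵐ[μ] lam)
    (hγGreatest : ∀ Z : Ω → ℝ, Measurable[ℱ s] Z →
      (∀ lam : Ω → ℝ, Measurable[ℱ s] lam → (∃ K, ∀ ω, |lam ω| ≤ K) →
        Vinf lam ≤ᵐ[μ] 0 → Z ≤ᵐ[μ] lam) → Z ≤ᵐ[μ] γ s) :
    Vinf (γ s) =ᵐ[μ] 0 ∧
      ∀ τ ∈ stopTimes ℱ s, (0 : Ω → ℝ) ≤ᵐ[μ] banditV E h β s τ (γ s) := by
  
  obtain ⟨hβ0, hβ1⟩ := hβ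
  have h1β : (0:ℝ) < 1 - β := by linarith
  set R : ℝ := β / (1 - β) with hRdef
  have hR : 0 < R := div_pos hβ0 h1β
  -- bounds on h
  have hh0 : ∀ t ω, 0 ≤ h t ω := by
    intro t ω
    by_cases ht : t ≤ T
    · exact (hhBdd t ht ω).1
    · rw [hhC t (by omega) ω]; exact hC.le
  have hhCle : ∀ t ω, h t ω ≤ C := by
    intro t ω
    by_cases ht : t ≤ T
    · exact (hhBdd t ht ω).2.le
    · rw [hhC t (by omega) ω]
  -- the constant stopping time 1
  have hτ1 : (fun _ : Ω => 1) ∈ stopTimes ℱ s := by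
    refine ⟨fun _ => le_refl 1, ⟨1, fun _ => le_refl 1⟩, fun n => ?_⟩
    by_cases h1 : 1 = n
    · have : {ω : Ω | 1 = n} = Set.univ := by ext ω; simp [h1]
      rw [this]; exact @MeasurableSet.univ Ω (ℱ (s + n))
    · have : {ω : Ω | 1 = n} = ∅ := by ext ω; simp [h1]
      rw [this]; exact @MeasurableSet.empty Ω (ℱ (s + n))
  -- sum lower bound for bounded lam
  have hsum_lb : ∀ (lam : Ω → ℝ) (K : ℝ), (∀ ω, |lam ω| ≤ K) → ∀ ω n,
      -(R * max K 0) ≤ ∑ t ∈ Icc 1 n, β ^ t * (h (s + t) ω - lam ω) := by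
    intro lam K hK ω n
    have hK0 : 0 ≤ max K 0 := le_max_right _ _
    have step : ∀ t ∈ Icc 1 n, β ^ t * (-(max K 0)) ≤ β ^ t * (h (s + t) ω - lam ω) := by
      intro t _
      apply mul_le_mul_of_nonneg_left _ (pow_nonneg hβ0.le t)
      have h1 := hh0 (s + t) ω
      have h2 := (abs_le.mp (hK ω)).2
      have h3 : K ≤ max K 0 := le_max_left _ _
      linarith
    calc -(R * max K 0) = -(max K 0) * R := by ring
      _ ≤ -(max K 0) * ∑ t ∈ Icc 1 n, β ^ t := by
          have := sum_pow_le' hβ0 hβ1 n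
          nlinarith
      _ = ∑ t ∈ Icc 1 n, β ^ t * (-(max K 0)) := by
          rw [Finset.mul_sum]; exact Finset.sum_congr rfl fun t _ => by ring
      _ ≤ _ := Finset.sum_le_sum step
  -- monotonicity of banditV and Vinf in lam
  have hBVmono : ∀ (τ : Ω → ℕ) (lam lam' : Ω → ℝ), lam ≤ᵐ[μ] lam' →
      banditV E h β s τ lam' ≤ᵐ[μ] banditV E h β s τ lam := by
    intro τ lam lam' hll
    apply hE.mono
    filter_upwards [hll] with ω hω
    apply Finset.sum_le_sum
    intro t _
    apply mul_le_mul_of_nonneg_left _ (pow_nonneg hβ0.le t)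
    linarith
  have hVmono : ∀ (lam lam' : Ω → ℝ), lam ≤ᵐ[μ] lam' → Vinf lam' ≤ᵐ[μ] Vinf lam := by
    intro lam lam' hll
    exact hVinfGreatest lam (Vinf lam') (hVinfMeas _)
      (fun τ hτ => (hVinfLB lam' τ hτ).trans (hBVmono τ lam lam' hll))
  have hVcongr : ∀ (lam lam' : Ω → ℝ), lam =ᵐ[μ] lam' → Vinf lam =ᵐ[μ] Vinf lam' := by
    intro lam lam' hll
    exact (hVmono lam' lam hll.symm.le).antisymm (hVmono lam lam' hll.le)
  -- shifting lam up decreases Vinf at rate at most R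
  have hVup : ∀ (lam c : Ω → ℝ), Measurable[ℱ s] c → (∀ ω, 0 ≤ c ω) →
      (fun ω => Vinf lam ω - R * c ω) ≤ᵐ[μ] Vinf (fun ω => lam ω + c ω) := by
    intro lam c hc hc0
    apply hVinfGreatest _ _ ((hVinfMeas lam).sub (hc.const_mul R))
    intro τ hτ
    have hpt : ∀ ω, (∑ t ∈ Icc 1 (τ ω), β ^ t * (h (s + t) ω - lam ω)) + (-(R * c ω)) ≤
        ∑ t ∈ Icc 1 (τ ω), β ^ t * (h (s + t) ω - (lam ω + c ω)) := by
      intro ω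
      have hid : ∑ t ∈ Icc 1 (τ ω), β ^ t * (h (s + t) ω - (lam ω + c ω)) =
          (∑ t ∈ Icc 1 (τ ω), β ^ t * (h (s + t) ω - lam ω)) - c ω * ∑ t ∈ Icc 1 (τ ω), β ^ t := by
        rw [Finset.mul_sum, ← Finset.sum_sub_distrib]
        exact Finset.sum_congr rfl fun t _ => by ring
      rw [hid]
      have h1 : c ω * ∑ t ∈ Icc 1 (τ ω), β ^ t ≤ c ω * R :=
        mul_le_mul_of_nonneg_left (sum_pow_le' hβ0 hβ1 _) (hc0 ω)
      linarith
    have hm := hE.mono s (fun ω => ∑ t ∈ Icc 1 (τ ω), β ^ t * (h (s + t) ω - (lam ω + c ω)))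
      (fun ω => (∑ t ∈ Icc 1 (τ ω), β ^ t * (h (s + t) ω - lam ω)) + (-(R * c ω)))
      (ae_of_all _ hpt)
    have ht := hE.transl s (fun ω => ∑ t ∈ Icc 1 (τ ω), β ^ t * (h (s + t) ω - lam ω))
      (fun ω => -(R * c ω)) ((hc.const_mul R).neg)
    have hlb := hVinfLB lam τ hτ
    simp only [banditV] at hlb ⊢
    filter_upwards [hm, ht, hlb] with ω e1 e2 e3
    have : Vinf lam ω - R * c ω ≤
        E s (fun ω => ∑ t ∈ Icc 1 (τ ω), β ^ t * (h (s + t) ω - lam ω)) ω + (-(R * c ω)) := by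
      linarith
    rw [← e2] at this
    exact this.trans e1
  -- shifting lam down increases Vinf at rate at most R
  have hVdown : ∀ (lam c : Ω → ℝ), Measurable[ℱ s] c → (∀ ω, 0 ≤ c ω) →
      Vinf (fun ω => lam ω - c ω) ≤ᵐ[μ] fun ω => Vinf lam ω + R * c ω := by
    intro lam c hc hc0
    have key : (fun ω => Vinf (fun ω' => lam ω' - c ω') ω - R * c ω) ≤ᵐ[μ] Vinf lam := by
      apply hVinfGreatest _ _
        ((hVinfMeas _).sub (hc.const_mul R))
      intro τ hτ
      have hpt : ∀ ω, (∑ t ∈ Icc 1 (τ ω), β ^ t * (h (s + t) ω - (lam ω - c ω))) ≤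
          (∑ t ∈ Icc 1 (τ ω), β ^ t * (h (s + t) ω - lam ω)) + (R * c ω) := by
        intro ω
        have hid : ∑ t ∈ Icc 1 (τ ω), β ^ t * (h (s + t) ω - (lam ω - c ω)) =
            (∑ t ∈ Icc 1 (τ ω), β ^ t * (h (s + t) ω - lam ω)) + c ω * ∑ t ∈ Icc 1 (τ ω), β ^ t := by
          rw [Finset.mul_sum, ← Finset.sum_add_distrib]
          exact Finset.sum_congr rfl fun t _ => by ring
        rw [hid]
        have h1 : c ω * ∑ t ∈ Icc 1 (τ ω), β ^ t ≤ c ω * R :=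
          mul_le_mul_of_nonneg_left (sum_pow_le' hβ0 hβ1 _) (hc0 ω)
        linarith
      have hm := hE.mono s
        (fun ω => (∑ t ∈ Icc 1 (τ ω), β ^ t * (h (s + t) ω - lam ω)) + (R * c ω))
        (fun ω => ∑ t ∈ Icc 1 (τ ω), β ^ t * (h (s + t) ω - (lam ω - c ω)))
        (ae_of_all _ hpt)
      have ht := hE.transl s (fun ω => ∑ t ∈ Icc 1 (τ ω), β ^ t * (h (s + t) ω - lam ω))
        (fun ω => R * c ω) (hc.const_mul R)
      have hlb := hVinfLB (fun ω => lam ω - c ω) τ hτ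
      simp only [banditV] at hlb ⊢
      filter_upwards [hm, ht, hlb] with ω e1 e2 e3
      have h4 : Vinf (fun ω' => lam ω' - c ω') ω ≤
          E s (fun ω => ∑ t ∈ Icc 1 (τ ω), β ^ t * (h (s + t) ω - lam ω)) ω + R * c ω := by
        rw [← e2]
        exact e3.trans e1
      show Vinf (fun ω' => lam ω' - c ω') ω - R * c ω ≤ _
      linarith
    filter_upwards [key] with ω e
    linarith [e]
  -- localization of Vinf
  have hVloc : ∀ (lam ν : Ω → ℝ) (K : ℝ), (∀ ω, |lam ω| ≤ K) → ∀ (B : Set Ω),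
      MeasurableSet[ℱ s] B → (∀ ω ∈ B, ν ω = lam ω) →
      ∀ᵐ ω ∂μ, ω ∈ B → Vinf ν ω ≤ Vinf lam ω := by
    intro lam ν K hK B hB hνlam
    set m : ℝ := -(R * max K 0) with hm
    set Z : Ω → ℝ := B.piecewise (Vinf ν) (fun _ => m) with hZ
    have hZmeas : Measurable[ℱ s] Z := Measurable.piecewise hB (hVinfMeas ν) measurable_const
    have hZle : ∀ τ ∈ stopTimes ℱ s, Z ≤ᵐ[μ] banditV E h β s τ lam := by
      intro τ hτ
      have h1 := hVinfLB ν τ hτ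
      have h2 := cne_loc_eq hE s
        (fun ω => ∑ t ∈ Icc 1 (τ ω), β ^ t * (h (s + t) ω - ν ω))
        (fun ω => ∑ t ∈ Icc 1 (τ ω), β ^ t * (h (s + t) ω - lam ω)) B hB
        (fun ω hω => Finset.sum_congr rfl fun t _ => by rw [hνlam ω hω])
      have h3 := cne_lb hE s
        (fun ω => ∑ t ∈ Icc 1 (τ ω), β ^ t * (h (s + t) ω - lam ω)) m
        (fun ω => hsum_lb lam K hK ω (τ ω))
      simp only [banditV] at h1 ⊢
      filter_upwards [h1, h2, h3] with ω e1 e2 e3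
      by_cases hω : ω ∈ B
      · rw [hZ, Set.piecewise_eq_of_mem _ _ _ hω]
        rw [← e2 hω]
        exact e1
      · rw [hZ, Set.piecewise_eq_of_notMem _ _ _ hω]
        exact e3
    have := hVinfGreatest lam Z hZmeas hZle
    filter_upwards [this] with ω e hω
    rw [hZ, Set.piecewise_eq_of_mem _ _ _ hω] at e
    exact e
  -- γ s ≤ C a.e.
  have hVC : Vinf (fun _ => C) ≤ᵐ[μ] 0 := by
    have hub : ∀ᵐ ω ∂μ, E s (fun ω => ∑ t ∈ Icc 1 ((fun _ : Ω => 1) ω),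
        β ^ t * (h (s + t) ω - C)) ω ≤ 0 := by
      apply cne_ub hE s _ 0
      intro ω
      simp only [Finset.Icc_self, Finset.sum_singleton, pow_one]
      have := hhCle (s + 1) ω
      nlinarith
    have hlb := hVinfLB (fun _ => C) (fun _ => 1) hτ1
    simp only [banditV] at hlb
    filter_upwards [hlb, hub] with ω e1 e2
    exact e1.trans e2
  have hγleC : γ s ≤ᵐ[μ] fun _ => C :=
    hγLB (fun _ => C) measurable_const ⟨C, fun ω => by rw [abs_of_pos hC]⟩ hVC
  -- every admissible lam is nonnegative a.e.
  have hlamNonneg : ∀ lam : Ω → ℝ, Measurable[ℱ s] lam → (∃ K, ∀ ω, |lam ω| ≤ K) →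
      Vinf lam ≤ᵐ[μ] 0 → (0:Ω→ℝ) ≤ᵐ[μ] lam := by
    rintro lam hmeas ⟨K, hK⟩ hV0
    have key : ∀ n : ℕ, ∀ᵐ ω ∂μ, -(1/((n:ℝ)+1)) ≤ lam ω := by
      intro n
      set ε : ℝ := 1/((n:ℝ)+1) with hεdef
      have hε : 0 < ε := by positivity
      set A : Set Ω := {ω | lam ω < -ε} with hA
      have hAmeas : MeasurableSet[ℱ s] A := by
        exact measurableSet_lt hmeas measurable_const
      set m : ℝ := -(R * max K 0) with hm
      set Z : Ω → ℝ := A.piecewise (fun _ => β * ε) (fun _ => m) with hZ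
      have hZmeas : Measurable[ℱ s] Z :=
        Measurable.piecewise hAmeas measurable_const measurable_const
      have hZle : ∀ τ ∈ stopTimes ℱ s, Z ≤ᵐ[μ] banditV E h β s τ lam := by
        intro τ hτ
        have h2 := cne_loc_lb hE s
          (fun ω => ∑ t ∈ Icc 1 (τ ω), β ^ t * (h (s + t) ω - lam ω)) A hAmeas (β * ε)
          (by
            intro ω hω
            have hω' : lam ω < -ε := hω
            have step : ∀ t ∈ Icc 1 (τ ω), β ^ t * ε ≤ β ^ t * (h (s + t) ω - lam ω) := by
              intro t _
              apply mul_le_mul_of_nonneg_left _ (pow_nonneg hβ0.le t)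
              have := hh0 (s + t) ω
              linarith
            have hsum : ∑ t ∈ Icc 1 (τ ω), β ^ t * ε ≤
                ∑ t ∈ Icc 1 (τ ω), β ^ t * (h (s + t) ω - lam ω) := Finset.sum_le_sum step
            have hgeom : β * ε ≤ ∑ t ∈ Icc 1 (τ ω), β ^ t * ε := by
              have h5 : ∑ t ∈ Icc 1 (τ ω), β ^ t * ε = (∑ t ∈ Icc 1 (τ ω), β ^ t) * ε := by
                rw [Finset.sum_mul]
              rw [h5]
              exact mul_le_mul_of_nonneg_right (sum_pow_ge' hβ0 (hτ.1 ω)) hε.le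
            linarith)
        have h3 := cne_lb hE s
          (fun ω => ∑ t ∈ Icc 1 (τ ω), β ^ t * (h (s + t) ω - lam ω)) m
          (fun ω => hsum_lb lam K hK ω (τ ω))
        simp only [banditV]
        filter_upwards [h2, h3] with ω e2 e3
        by_cases hω : ω ∈ A
        · rw [hZ, Set.piecewise_eq_of_mem _ _ _ hω]; exact e2 hω
        · rw [hZ, Set.piecewise_eq_of_notMem _ _ _ hω]; exact e3
      have hfin := hVinfGreatest lam Z hZmeas hZle
      filter_upwards [hfin, hV0] with ω e1 e2
      by_cases hω : ω ∈ A
      · exfalso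
        rw [hZ, Set.piecewise_eq_of_mem _ _ _ hω] at e1
        have : (0:ℝ) < β * ε := by positivity
        have e2' : Vinf lam ω ≤ 0 := e2
        linarith
      · have : ¬ (lam ω < -ε) := hω
        linarith
    have := ae_all_iff.mpr key
    filter_upwards [this] with ω hω
    by_contra hneg
    push_neg at hneg
    simp only [Pi.zero_apply] at hneg
    obtain ⟨n, hn⟩ := exists_nat_one_div_lt (show (0:ℝ) < -lam ω by linarith)
    have := hω n
    rw [show ((n:ℝ)+1) = (n+1 : ℕ) by push_cast; ring] at this hn
    linarith
  have hγ0 : (0:Ω→ℝ) ≤ᵐ[μ] γ s :=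
    hγGreatest 0 measurable_const fun lam h1 h2 h3 => hlamNonneg lam h1 h2 h3
  -- Part (i): Vinf (γ s) ≤ 0 a.e.
  have hVle : Vinf (γ s) ≤ᵐ[μ] (0:Ω→ℝ) := by
    have key : ∀ n : ℕ, ∀ᵐ ω ∂μ, Vinf (γ s) ω ≤ 1/((n:ℝ)+1) := by
      intro n
      set ε : ℝ := 1/((n:ℝ)+1) with hεdef
      have hε : 0 < ε := by positivity
      set δ : ℝ := ε / (2 * R) with hδdef
      have hδ : 0 < δ := by positivity
      have hRδ : R * δ = ε / 2 := by
        rw [hδdef]; field_simp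
      set A : Set Ω := {ω | ε < Vinf (γ s) ω} with hA
      have hAmeas : MeasurableSet[ℱ s] A :=
        measurableSet_lt measurable_const (hVinfMeas _)
      set ind : Ω → ℝ := A.indicator (fun _ => 1) with hind
      have hindMeas : Measurable[ℱ s] ind := measurable_const.indicator hAmeas
      set Zt : Ω → ℝ := fun ω => γ s ω + δ * ind ω with hZt
      have hZtmeas : Measurable[ℱ s] Zt := hγMeas.add (hindMeas.const_mul δ)
      have hlow : ∀ lam : Ω → ℝ, Measurable[ℱ s] lam → (∃ K, ∀ ω, |lam ω| ≤ K) →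
          Vinf lam ≤ᵐ[μ] 0 → Zt ≤ᵐ[μ] lam := by
        rintro lam hm ⟨K, hK⟩ hV0
        set B : Set Ω := A ∩ {ω | lam ω < γ s ω + δ} with hB
        have hBmeas : MeasurableSet[ℱ s] B := by
          apply hAmeas.inter
          exact measurableSet_lt hm (hγMeas.add_const δ)
        set ν : Ω → ℝ := B.piecewise lam (fun ω => γ s ω + δ) with hν
        have hνle : ∀ ω, ν ω ≤ γ s ω + δ := by
          intro ω
          by_cases hω : ω ∈ B
          · rw [hν, Set.piecewise_eq_of_mem _ _ _ hω]
            exact (hω.2 : lam ω < γ s ω + δ).le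
          · rw [hν, Set.piecewise_eq_of_notMem _ _ _ hω]
        have c1 : Vinf (fun ω => γ s ω + δ) ≤ᵐ[μ] Vinf ν :=
          hVmono ν (fun ω => γ s ω + δ) (ae_of_all _ hνle)
        have c2 : (fun ω => Vinf (γ s) ω - R * δ) ≤ᵐ[μ] Vinf (fun ω => γ s ω + δ) := by
          have := hVup (γ s) (fun _ => δ) measurable_const (fun _ => hδ.le)
          exact this
        have c3 : ∀ᵐ ω ∂μ, ω ∈ B → Vinf ν ω ≤ Vinf lam ω :=
          hVloc lam ν K hK B hBmeas (fun ω hω => Set.piecewise_eq_of_mem _ _ _ hω)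
        have c5 := hγLB lam hm ⟨K, hK⟩ hV0
        filter_upwards [c1, c2, c3, hV0, c5] with ω e1 e2 e3 e4 e5
        simp only [hZt]
        by_cases hωA : ω ∈ A
        · by_cases hωB : ω ∈ B
          · exfalso
            have g1 := e3 hωB
            have g2 : Vinf lam ω ≤ 0 := e4
            have g3 : ε < Vinf (γ s) ω := hωA
            linarith [hRδ, e1, e2]
          · have : ¬ (lam ω < γ s ω + δ) := fun hc => hωB ⟨hωA, hc⟩
            have hi : ind ω = 1 := by simp [hind, Set.indicator_of_mem hωA]
            rw [hi]
            linarith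
        · have hi : ind ω = 0 := by simp [hind, Set.indicator_of_notMem hωA]
          rw [hi]
          simpa using e5
      have hfin := hγGreatest Zt hZtmeas hlow
      filter_upwards [hfin] with ω e
      by_contra hc
      push_neg at hc
      have hωA : ω ∈ A := hc
      have hi : ind ω = 1 := by simp [hind, Set.indicator_of_mem hωA]
      simp only [hZt, hi, mul_one] at e
      linarith
    have := ae_all_iff.mpr key
    filter_upwards [this] with ω hω
    simp only [Pi.zero_apply]
    by_contra hneg
    push_neg at hneg
    obtain ⟨n, hn⟩ := exists_nat_one_div_lt hneg
    have := hω n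
    rw [show ((n:ℝ)+1) = (n+1 : ℕ) by push_cast; ring] at this hn
    linarith
  -- Part (ii): Vinf (γ s) ≥ 0 a.e.
  have hVge : (0:Ω→ℝ) ≤ᵐ[μ] Vinf (γ s) := by
    set γt : Ω → ℝ := fun ω => max 0 (min (γ s ω) C) with hγt
    have hγtMeas : Measurable[ℱ s] γt := measurable_const.max (hγMeas.min measurable_const)
    have hγtBdd : ∀ ω, |γt ω| ≤ C := by
      intro ω
      rw [abs_le]
      constructor
      · have : (0:ℝ) ≤ γt ω := le_max_left _ _
        linarith
      · simp only [hγt]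
        rw [max_le_iff]
        exact ⟨hC.le, (min_le_right _ _)⟩
    have hγeq : γ s =ᵐ[μ] γt := by
      filter_upwards [hγ0, hγleC] with ω h0 hc
      simp only [Pi.zero_apply] at h0
      simp only [hγt]
      rw [min_eq_left hc, max_eq_right h0]
    have hVγt : Vinf γt =ᵐ[μ] Vinf (γ s) := hVcongr γt (γ s) hγeq.symm
    have key : ∀ n : ℕ, ∀ᵐ ω ∂μ, -(1/((n:ℝ)+1)) ≤ Vinf (γ s) ω := by
      intro n
      set ε : ℝ := 1/((n:ℝ)+1) with hεdef
      have hε : 0 < ε := by positivity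
      set δ : ℝ := ε / (2 * R) with hδdef
      have hδ : 0 < δ := by positivity
      have hRδ : R * δ = ε / 2 := by rw [hδdef]; field_simp
      set A : Set Ω := {ω | Vinf (γ s) ω < -ε} with hA
      have hAmeas : MeasurableSet[ℱ s] A :=
        measurableSet_lt (hVinfMeas _) measurable_const
      set ind : Ω → ℝ := A.indicator (fun _ => 1) with hind
      have hindMeas : Measurable[ℱ s] ind := measurable_const.indicator hAmeas
      have hind01 : ∀ ω, 0 ≤ ind ω ∧ ind ω ≤ 1 := by
        intro ω
        by_cases hω : ω ∈ A
        · simp [hind, Set.indicator_of_mem hω]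
        · simp [hind, Set.indicator_of_notMem hω]
      set c : Ω → ℝ := fun ω => δ * ind ω with hc
      have hcMeas : Measurable[ℱ s] c := hindMeas.const_mul δ
      have hc0 : ∀ ω, 0 ≤ c ω := fun ω => mul_nonneg hδ.le (hind01 ω).1
      set lam' : Ω → ℝ := fun ω => γt ω - c ω with hlam'
      have hlam'Meas : Measurable[ℱ s] lam' := hγtMeas.sub hcMeas
      have hlam'Bdd : ∃ K, ∀ ω, |lam' ω| ≤ K := by
        refine ⟨C + δ, fun ω => ?_⟩
        rw [abs_le]
        have h1 := hγtBdd ω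
        rw [abs_le] at h1
        have h2 := hc0 ω
        have h3 : c ω ≤ δ := by
          simp only [hc]
          nlinarith [(hind01 ω).2, hδ.le]
        constructor <;> simp only [hlam'] <;> linarith
      have hVd := hVdown γt c hcMeas hc0
      have hV0' : Vinf lam' ≤ᵐ[μ] 0 := by
        filter_upwards [hVd, hVγt, hVle] with ω e1 e2 e3
        simp only [Pi.zero_apply] at e3 ⊢
        have e1' : Vinf lam' ω ≤ Vinf γt ω + R * c ω := e1
        by_cases hω : ω ∈ A
        · have hi : ind ω = 1 := by simp [hind, Set.indicator_of_mem hω]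
          have hω' : Vinf (γ s) ω < -ε := hω
          simp only [hc, hi, mul_one] at e1'
          rw [e2] at e1'
          linarith
        · have hi : ind ω = 0 := by simp [hind, Set.indicator_of_notMem hω]
          simp only [hc, hi, mul_zero] at e1'
          rw [e2] at e1'
          linarith
      have hle := hγLB lam' hlam'Meas hlam'Bdd hV0'
      filter_upwards [hle, hγeq] with ω e1 e2
      by_contra hcon
      push_neg at hcon
      have hωA : ω ∈ A := hcon
      have hi : ind ω = 1 := by simp [hind, Set.indicator_of_mem hωA]
      have : γ s ω ≤ γt ω - c ω := e1
      rw [← e2] at this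
      simp only [hc, hi, mul_one] at this
      linarith
    have := ae_all_iff.mpr key
    filter_upwards [this] with ω hω
    simp only [Pi.zero_apply]
    by_contra hneg
    push_neg at hneg
    obtain ⟨n, hn⟩ := exists_nat_one_div_lt (show (0:ℝ) < -(Vinf (γ s) ω) by linarith)
    have := hω n
    rw [show ((n:ℝ)+1) = (n+1 : ℕ) by push_cast; ring] at this hn
    linarith
  refine ⟨hVle.antisymm hVge, fun τ hτ => ?_⟩
  filter_upwards [hVge, hVinfLB (γ s) τ hτ] with ω e1 e2
  simp only [Pi.zero_apply] at e1 ⊢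
  exact e1.trans e2
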